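/- Let (a, b, c) with a ≤ b ≤ c be the signature of a cubic girth-regular graph Γ of finite girth g. If a ≥ 1 and c = a + b, then g is even. -/

import Mathlib

open SimpleGraph

/-- `s` is the edge set of some cycle of length `g` in `G`. -/
def IsGirthCycleEdgeSet {V : Type*} (G : SimpleGraph V) (g : ℕ) (s : Set (Sym2 V)) : Prop :=
  ∃ (u : V) (w : G.Walk u u), w.IsCycle ∧ w.length = g ∧ s = {e | e ∈ w.edges}

/-- The number of cycles of length `g` in `G` that contain the edge `e`. -/
noncomputable def girthCycleCount {V : Type*} (G : SimpleGraph V) (g : ℕ) (e : Sym2 V) : ℕ :=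
  Set.ncard {s : Set (Sym2 V) | IsGirthCycleEdgeSet G g s ∧ e ∈ s}

/-- The multiset of the numbers of `g`-cycles through the edges incident to `v`. -/
noncomputable def vertexSignature {V : Type*} [Fintype V] (G : SimpleGraph V) (g : ℕ)
    (v : V) : Multiset ℕ :=
  ((G.neighborSet v).toFinite.toFinset.val).map fun u => girthCycleCount G g s(v, u)

private lemma walk_edges_getElem? {V : Type*} {G : SimpleGraph V} {u v : V} (w : G.Walk u v) :
    ∀ i, i < w.length → w.edges[i]? = some s(w.getVert i, w.getVert (i+1)) := by
  induction w with
  | nil => intro i hi; simp at hi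
  | @cons u' v' w' h p ih =>
    intro i hi
    cases i with
    | zero => simp [SimpleGraph.Walk.getVert_cons_succ, SimpleGraph.Walk.getVert_cons]
    | succ n =>
      rw [SimpleGraph.Walk.edges_cons]
      simp only [List.getElem?_cons_succ, SimpleGraph.Walk.getVert_cons_succ]
      exact ih n (by simpa using hi)

private lemma path_start_unique {V : Type*} {G : SimpleGraph V} {v t : V} (q : G.Walk v t)
    (hq : q.IsPath) {x y : V} (hx : s(v,x) ∈ q.edges) (hy : s(v,y) ∈ q.edges) : x = y := by
  cases q with
  | nil => simp at hx
  | @cons _ w' _ h r =>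
    rw [SimpleGraph.Walk.cons_isPath_iff] at hq
    have key : ∀ z, s(v,z) ∈ (SimpleGraph.Walk.cons h r).edges → z = w' := by
      intro z hz
      rw [SimpleGraph.Walk.edges_cons, List.mem_cons] at hz
      rcases hz with hz | hz
      · rcases Sym2.eq_iff.mp hz with ⟨-, hzw⟩ | ⟨hvw, -⟩
        · exact hzw
        · exact absurd hvw h.ne
      · exact absurd (r.fst_mem_support_of_mem_edges hz) hq.2
    rw [key x hx, key y hy]

private lemma start_edge {V : Type*} {G : SimpleGraph V} {v t : V} (q : G.Walk v t)
    (hq : ¬ q.Nil) : ∃ x, s(v,x) ∈ q.edges := by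
  cases q with
  | nil => simp at hq
  | @cons _ w' _ h r => exact ⟨w', by simp⟩

private lemma cycle_two_edges_base {V : Type*} {G : SimpleGraph V} {v x : V} (c : G.Walk v v)
    (hc : c.IsCycle) (hx : s(v,x) ∈ c.edges) :
    ∃ y, y ≠ x ∧ s(v,y) ∈ c.edges ∧ ∀ z, s(v,z) ∈ c.edges → z = x ∨ z = y := by
  have h3 := hc.three_le_length
  cases c with
  | nil => simp at hx
  | @cons _ w' _ h p =>
    rw [SimpleGraph.Walk.cons_isCycle_iff] at hc
    obtain ⟨hp, hvw⟩ := hc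
    have hwv : w' ≠ v := fun hh => h.ne hh.symm
    have hpnil : ¬ p.reverse.Nil := by
      rw [SimpleGraph.Walk.nil_iff_length_eq]
      simp only [SimpleGraph.Walk.length_reverse]
      rw [SimpleGraph.Walk.length_cons] at h3
      omega
    obtain ⟨x₀, hx₀⟩ := start_edge p.reverse hpnil
    rw [SimpleGraph.Walk.edges_reverse, List.mem_reverse] at hx₀
    have huniq : ∀ z, s(v,z) ∈ p.edges → z = x₀ := by
      intro z hz
      exact path_start_unique p.reverse hp.reverse
        (by rw [SimpleGraph.Walk.edges_reverse, List.mem_reverse]; exact hz)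
        (by rw [SimpleGraph.Walk.edges_reverse, List.mem_reverse]; exact hx₀)
    have hx₀w : x₀ ≠ w' := by
      intro hh; rw [hh] at hx₀; exact hvw hx₀
    have hchar : ∀ z, s(v,z) ∈ (SimpleGraph.Walk.cons h p).edges → z = w' ∨ z = x₀ := by
      intro z hz
      rw [SimpleGraph.Walk.edges_cons, List.mem_cons] at hz
      rcases hz with hz | hz
      · rcases Sym2.eq_iff.mp hz with ⟨-, hzw⟩ | ⟨hvw', -⟩
        · exact Or.inl hzw
        · exact absurd hvw' h.ne
      · exact Or.inr (huniq z hz)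
    have hw'mem : s(v,w') ∈ (SimpleGraph.Walk.cons h p).edges := by simp
    have hx₀mem : s(v,x₀) ∈ (SimpleGraph.Walk.cons h p).edges := by
      rw [SimpleGraph.Walk.edges_cons, List.mem_cons]; exact Or.inr hx₀
    rcases hchar x hx with hxx | hxx
    · exact ⟨x₀, hxx ▸ hx₀w, hx₀mem, fun z hz => by
        rcases hchar z hz with h1 | h1
        · exact Or.inl (by rw [h1, hxx])
        · exact Or.inr h1⟩
    · refine ⟨w', hxx ▸ (Ne.symm hx₀w), hw'mem, fun z hz => ?_⟩
      rcases hchar z hz with h1 | h1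
      · exact Or.inr h1
      · exact Or.inl (by rw [h1, hxx])

private lemma cycle_two_edges {V : Type*} {G : SimpleGraph V} {u v x : V} (c : G.Walk u u)
    (hc : c.IsCycle) (hx : s(v,x) ∈ c.edges) :
    ∃ y, y ≠ x ∧ s(v,y) ∈ c.edges ∧ ∀ z, s(v,z) ∈ c.edges → z = x ∨ z = y := by
  classical
  have hv : v ∈ c.support := c.fst_mem_support_of_mem_edges hx
  have hmem : ∀ e, e ∈ (c.rotate v hv).edges ↔ e ∈ c.edges :=
    fun e => (SimpleGraph.Walk.rotate_edges c v hv).mem_iff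
  obtain ⟨y, h1, h2, h3⟩ := cycle_two_edges_base (c.rotate v hv) (hc.rotate hv) ((hmem _).mpr hx)
  exact ⟨y, h1, (hmem _).mp h2, fun z hz => h3 z ((hmem _).mpr hz)⟩

private lemma count_partition {V : Type*} [Fintype V] (G : SimpleGraph V) (g : ℕ)
    {v x y t : V} (hnb : ∀ z, G.Adj v z ↔ z = x ∨ z = y ∨ z = t)
    (hxy : x ≠ y) (hxt : x ≠ t) (hyt : y ≠ t) :
    girthCycleCount G g s(v,x)
      = Set.ncard {s : Set (Sym2 V) | IsGirthCycleEdgeSet G g s ∧ s(v,x) ∈ s ∧ s(v,y) ∈ s}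
      + Set.ncard {s : Set (Sym2 V) | IsGirthCycleEdgeSet G g s ∧ s(v,x) ∈ s ∧ s(v,t) ∈ s} := by
  have hsplit : {s : Set (Sym2 V) | IsGirthCycleEdgeSet G g s ∧ s(v,x) ∈ s}
      = {s : Set (Sym2 V) | IsGirthCycleEdgeSet G g s ∧ s(v,x) ∈ s ∧ s(v,y) ∈ s}
        ∪ {s : Set (Sym2 V) | IsGirthCycleEdgeSet G g s ∧ s(v,x) ∈ s ∧ s(v,t) ∈ s} := by
    ext s
    simp only [Set.mem_setOf_eq, Set.mem_union]
    constructor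
    · rintro ⟨hs, hsx⟩
      obtain ⟨u, w, hw, hlen, rfl⟩ := hs
      simp only [Set.mem_setOf_eq] at hsx ⊢
      obtain ⟨y', hy'x, hy'mem, -⟩ := cycle_two_edges w hw hsx
      have hadj : G.Adj v y' := w.adj_of_mem_edges hy'mem
      rcases (hnb y').mp hadj with h1 | h1 | h1
      · exact absurd h1 hy'x
      · exact Or.inl ⟨⟨u, w, hw, hlen, rfl⟩, hsx, h1 ▸ hy'mem⟩
      · exact Or.inr ⟨⟨u, w, hw, hlen, rfl⟩, hsx, h1 ▸ hy'mem⟩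
    · rintro (⟨hs, hsx, -⟩ | ⟨hs, hsx, -⟩) <;> exact ⟨hs, hsx⟩
  have hdisj : Disjoint
      {s : Set (Sym2 V) | IsGirthCycleEdgeSet G g s ∧ s(v,x) ∈ s ∧ s(v,y) ∈ s}
      {s : Set (Sym2 V) | IsGirthCycleEdgeSet G g s ∧ s(v,x) ∈ s ∧ s(v,t) ∈ s} := by
    rw [Set.disjoint_left]
    rintro s ⟨hs, hsx, hsy⟩ ⟨-, -, hst⟩
    obtain ⟨u, w, hw, hlen, rfl⟩ := hs
    simp only [Set.mem_setOf_eq] at hsx hsy hst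
    obtain ⟨y', -, -, hchar⟩ := cycle_two_edges w hw hsx
    rcases hchar y hsy with h1 | h1
    · exact hxy h1.symm
    · rcases hchar t hst with h2 | h2
      · exact hxt h2.symm
      · exact hyt (h1.trans h2.symm)
  rw [girthCycleCount, hsplit, Set.ncard_union_eq hdisj (Set.toFinite _) (Set.toFinite _)]

private lemma alternate {V : Type*} [Fintype V] (G : SimpleGraph V) [DecidableRel G.Adj]
    (g : ℕ) (hreg : G.IsRegularOfDegree 3) (a b c : ℕ)
    (hsig : ∀ v : V, vertexSignature G g v = {a, b, c})
    (ha : 1 ≤ a) (hab : a ≤ b) (hcab : c = a + b)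
    {v x y : V} (hvx : G.Adj v x) (hvy : G.Adj v y) (hxy : x ≠ y)
    {s : Set (Sym2 V)} (hs : IsGirthCycleEdgeSet G g s) (hsx : s(v,x) ∈ s) (hsy : s(v,y) ∈ s) :
    (girthCycleCount G g s(v,x) = c) ↔ ¬ (girthCycleCount G g s(v,y) = c) := by
  classical
  have hdeg : (G.neighborFinset v).card = 3 := hreg v
  have hxmem : x ∈ G.neighborFinset v := by rwa [mem_neighborFinset]
  have hymem : y ∈ G.neighborFinset v := by rwa [mem_neighborFinset]
  have hsub : {x, y} ⊆ G.neighborFinset v := by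
    intro z hz; simp only [Finset.mem_insert, Finset.mem_singleton] at hz
    rcases hz with rfl | rfl <;> assumption
  have hcard2 : ({x, y} : Finset V).card = 2 := by
    rw [Finset.card_insert_of_notMem (by simpa using hxy), Finset.card_singleton]
  have hFcard : ((G.neighborFinset v) \ {x, y}).card = 1 := by
    rw [Finset.card_sdiff_of_subset hsub, hdeg, hcard2]
  obtain ⟨t, ht⟩ := Finset.card_eq_one.mp hFcard
  have htmem : t ∈ G.neighborFinset v := by
    have : t ∈ (G.neighborFinset v) \ {x, y} := ht ▸ Finset.mem_singleton_self t
    exact Finset.mem_sdiff.mp this |>.1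
  have htxy : t ≠ x ∧ t ≠ y := by
    have : t ∈ (G.neighborFinset v) \ {x, y} := ht ▸ Finset.mem_singleton_self t
    have := Finset.mem_sdiff.mp this |>.2
    simp only [Finset.mem_insert, Finset.mem_singleton] at this
    tauto
  have hxt : x ≠ t := fun h => htxy.1 h.symm
  have hyt : y ≠ t := fun h => htxy.2 h.symm
  have hnfin : G.neighborFinset v = {x, y, t} := by
    apply Finset.eq_of_subset_of_card_le
    · intro z hz
      by_cases hzx : z = x
      · simp [hzx]
      by_cases hzy : z = y
      · simp [hzy]
      have : z ∈ (G.neighborFinset v) \ {x, y} := by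
        rw [Finset.mem_sdiff]; exact ⟨hz, by simp [hzx, hzy]⟩
      rw [ht, Finset.mem_singleton] at this
      subst this
      simp
    · exact Finset.card_le_card (by
        intro z hz
        simp only [Finset.mem_insert, Finset.mem_singleton] at hz
        rcases hz with rfl | rfl | rfl
        · exact hxmem
        · exact hymem
        · exact htmem)
  have hnb : ∀ z, G.Adj v z ↔ z = x ∨ z = y ∨ z = t := by
    intro z
    rw [← mem_neighborFinset, hnfin]
    simp
  set f : V → ℕ := fun u => girthCycleCount G g s(v, u) with hf
  have htofin : (G.neighborSet v).toFinite.toFinset = G.neighborFinset v := by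
    ext z; simp [Set.Finite.mem_toFinset, mem_neighborFinset, mem_neighborSet]
  have hmul : ({f x, f y, f t} : Multiset ℕ) = {a, b, c} := by
    have h1 := hsig v
    rw [vertexSignature, htofin, hnfin] at h1
    rw [← h1]
    have hval : ({x, y, t} : Finset V).val = (x ::ₘ y ::ₘ {t} : Multiset V) := by
      have h1' : y ∉ ({t} : Finset V) := by simp [hyt]
      have h2' : x ∉ ({y, t} : Finset V) := by simp [hxy, hxt]
      rw [show ({x,y,t} : Finset V) = insert x {y,t} from rfl, Finset.insert_val_of_notMem h2',
        show ({y,t} : Finset V) = insert y {t} from rfl, Finset.insert_val_of_notMem h1']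
      rfl
    rw [hval]
    simp [hf]
  have hsum : f x + f y + f t = a + b + c := by
    have := congrArg Multiset.sum hmul
    simpa [add_assoc] using this
  have hex : f x = Set.ncard {s : Set (Sym2 V) | IsGirthCycleEdgeSet G g s ∧ s(v,x) ∈ s ∧ s(v,y) ∈ s}
      + Set.ncard {s : Set (Sym2 V) | IsGirthCycleEdgeSet G g s ∧ s(v,x) ∈ s ∧ s(v,t) ∈ s} :=
    count_partition G g hnb hxy hxt hyt
  have hey : f y = Set.ncard {s : Set (Sym2 V) | IsGirthCycleEdgeSet G g s ∧ s(v,y) ∈ s ∧ s(v,x) ∈ s}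
      + Set.ncard {s : Set (Sym2 V) | IsGirthCycleEdgeSet G g s ∧ s(v,y) ∈ s ∧ s(v,t) ∈ s} :=
    count_partition G g (fun z => by rw [hnb z]; tauto) (Ne.symm hxy) hyt hxt
  have het : f t = Set.ncard {s : Set (Sym2 V) | IsGirthCycleEdgeSet G g s ∧ s(v,t) ∈ s ∧ s(v,x) ∈ s}
      + Set.ncard {s : Set (Sym2 V) | IsGirthCycleEdgeSet G g s ∧ s(v,t) ∈ s ∧ s(v,y) ∈ s} :=
    count_partition G g (fun z => by rw [hnb z]; tauto) (Ne.symm hxt) (Ne.symm hyt) hxy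
  have hswap1 : {s : Set (Sym2 V) | IsGirthCycleEdgeSet G g s ∧ s(v,y) ∈ s ∧ s(v,x) ∈ s}
      = {s : Set (Sym2 V) | IsGirthCycleEdgeSet G g s ∧ s(v,x) ∈ s ∧ s(v,y) ∈ s} := by
    ext s; simp only [Set.mem_setOf_eq]; tauto
  have hswap2 : {s : Set (Sym2 V) | IsGirthCycleEdgeSet G g s ∧ s(v,t) ∈ s ∧ s(v,x) ∈ s}
      = {s : Set (Sym2 V) | IsGirthCycleEdgeSet G g s ∧ s(v,x) ∈ s ∧ s(v,t) ∈ s} := by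
    ext s; simp only [Set.mem_setOf_eq]; tauto
  have hswap3 : {s : Set (Sym2 V) | IsGirthCycleEdgeSet G g s ∧ s(v,t) ∈ s ∧ s(v,y) ∈ s}
      = {s : Set (Sym2 V) | IsGirthCycleEdgeSet G g s ∧ s(v,y) ∈ s ∧ s(v,t) ∈ s} := by
    ext s; simp only [Set.mem_setOf_eq]; tauto
  rw [hswap1] at hey
  rw [hswap2, hswap3] at het
  set m := Set.ncard {s : Set (Sym2 V) | IsGirthCycleEdgeSet G g s ∧ s(v,x) ∈ s ∧ s(v,y) ∈ s} with hm
  set n1 := Set.ncard {s : Set (Sym2 V) | IsGirthCycleEdgeSet G g s ∧ s(v,x) ∈ s ∧ s(v,t) ∈ s} with hn1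
  set n2 := Set.ncard {s : Set (Sym2 V) | IsGirthCycleEdgeSet G g s ∧ s(v,y) ∈ s ∧ s(v,t) ∈ s} with hn2
  have hm1 : 1 ≤ m := by
    rw [hm]
    rw [Nat.one_le_iff_ne_zero, Ne, Set.ncard_eq_zero (Set.toFinite _)]
    intro h
    have : s ∈ {s : Set (Sym2 V) | IsGirthCycleEdgeSet G g s ∧ s(v,x) ∈ s ∧ s(v,y) ∈ s} :=
      ⟨hs, hsx, hsy⟩
    rw [h] at this
    exact this
  have hft : f t ≠ c := by omega
  have hmemc : c = f x ∨ c = f y ∨ c = f t := by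
    have : c ∈ ({f x, f y, f t} : Multiset ℕ) := by rw [hmul]; simp
    simpa using this
  have hmemt : f t = a ∨ f t = b ∨ f t = c := by
    have : f t ∈ ({a, b, c} : Multiset ℕ) := by rw [← hmul]; simp
    simpa using this
  show f x = c ↔ ¬ f y = c
  omega

/-- If a cubic girth-regular graph of finite girth g has signature (a, b, c) with a ≥ 1 and c = a + b, then g is even. -/
theorem stmt7 {V : Type*} [Fintype V] (G : SimpleGraph V) [DecidableRel G.Adj]
    (g : ℕ) (hreg : G.IsRegularOfDegree 3) (hg : G.egirth = (g : ℕ∞))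
    (a b c : ℕ) (hab : a ≤ b) (hbc : b ≤ c)
    (hsig : ∀ v : V, vertexSignature G g v = {a, b, c})
    (ha : 1 ≤ a) (hcab : c = a + b) :
    Even g := by
  classical
  have hnac : ¬ G.IsAcyclic := by
    intro h
    rw [← SimpleGraph.egirth_eq_top] at h
    rw [h] at hg
    exact (by simp : (⊤ : ℕ∞) ≠ (g : ℕ∞)) hg
  obtain ⟨u, w, hw, hlen⟩ := SimpleGraph.exists_egirth_eq_length.mpr hnac
  rw [hg] at hlen
  have hlen' : w.length = g := by exact_mod_cast hlen.symm
  have hg3 : 3 ≤ g := hlen' ▸ hw.three_le_length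
  have hnodup : w.edges.Nodup := hw.isCircuit.isTrail.edges_nodup
  have hs0 : IsGirthCycleEdgeSet G g {e | e ∈ w.edges} := ⟨u, w, hw, hlen', rfl⟩
  have hedge : ∀ i, i < g → w.edges[i]? = some s(w.getVert i, w.getVert (i+1)) :=
    fun i hi => walk_edges_getElem? w i (by omega)
  have hedgemem : ∀ i, i < g → s(w.getVert i, w.getVert (i+1)) ∈ w.edges :=
    fun i hi => List.mem_of_getElem? (hedge i hi)
  have hedgene : ∀ i j, i < g → j < g → i ≠ j →
      s(w.getVert i, w.getVert (i+1)) ≠ s(w.getVert j, w.getVert (j+1)) := by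
    intro i j hi hj hij heq
    apply hij
    apply (List.getElem?_inj (l := w.edges) ?_ hnodup).mp
    · rw [hedge i hi, hedge j hj, heq]
    · rw [SimpleGraph.Walk.length_edges, hlen']; exact hi
  set P : ℕ → Prop := fun i => girthCycleCount G g s(w.getVert i, w.getVert (i+1)) = c with hP
  have hstep : ∀ i, i + 1 < g → (P (i+1) ↔ ¬ P i) := by
    intro i hi
    have hia : i < g := by omega
    have hadj1 : G.Adj (w.getVert (i+1)) (w.getVert (i+1+1)) :=
      w.adj_getVert_succ (by omega)
    have hadj2 : G.Adj (w.getVert (i+1)) (w.getVert i) :=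
      (w.adj_getVert_succ (by omega : i < w.length)).symm
    have hne : w.getVert (i+1+1) ≠ w.getVert i := fun h =>
      hedgene i (i+1) hia hi (by omega) (by rw [h]; exact Sym2.eq_swap)
    have hsx : s(w.getVert (i+1), w.getVert (i+1+1)) ∈ {e | e ∈ w.edges} :=
      hedgemem (i+1) hi
    have hsy : s(w.getVert (i+1), w.getVert i) ∈ {e | e ∈ w.edges} := by
      show s(w.getVert (i+1), w.getVert i) ∈ w.edges
      rw [Sym2.eq_swap]
      exact hedgemem i hia
    have halt := alternate G g hreg a b c hsig ha hab hcab hadj1 hadj2 hne hs0 hsx hsy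
    rw [show s(w.getVert (i+1), w.getVert i) = s(w.getVert i, w.getVert (i+1)) from
      Sym2.eq_swap] at halt
    exact halt
  have hgv : w.getVert g = u := by rw [← hlen']; exact w.getVert_length
  have hgv0 : w.getVert 0 = u := w.getVert_zero
  have hsucc : g - 1 + 1 = g := by omega
  have hwrap : P 0 ↔ ¬ P (g-1) := by
    have hadj1 : G.Adj u (w.getVert 1) := by
      have := w.adj_getVert_succ (by omega : 0 < w.length)
      rwa [hgv0] at this
    have hadj2 : G.Adj u (w.getVert (g-1)) := by
      have := w.adj_getVert_succ (by omega : g - 1 < w.length)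
      rw [hsucc, hgv] at this
      exact this.symm
    have hne : w.getVert 1 ≠ w.getVert (g-1) := by
      intro h
      apply hedgene 0 (g-1) (by omega) (by omega) (by omega)
      rw [hsucc, hgv, hgv0, h]
      exact Sym2.eq_swap
    have hsx : s(u, w.getVert 1) ∈ {e | e ∈ w.edges} := by
      have h0 := hedgemem 0 (by omega)
      rw [hgv0] at h0
      exact h0
    have hsy : s(u, w.getVert (g-1)) ∈ {e | e ∈ w.edges} := by
      have h0 := hedgemem (g-1) (by omega)
      rw [hsucc, hgv] at h0
      show s(u, w.getVert (g-1)) ∈ w.edges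
      rw [Sym2.eq_swap]
      exact h0
    have halt := alternate G g hreg a b c hsig ha hab hcab hadj1 hadj2 hne hs0 hsx hsy
    rw [show s(u, w.getVert 1) = s(w.getVert 0, w.getVert (0+1)) from by rw [hgv0],
      show s(u, w.getVert (g-1)) = s(w.getVert (g-1), w.getVert (g-1+1)) from by
        rw [hsucc, hgv, Sym2.eq_swap]] at halt
    exact halt
  have hind : ∀ i, i < g → (P i ↔ (Even i ↔ P 0)) := by
    intro i
    induction i with
    | zero => intro _; simp
    | succ n ih =>
      intro hn
      rw [hstep n hn, ih (by omega), Nat.even_add_one]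
      tauto
  by_contra hodd
  rw [Nat.not_even_iff_odd] at hodd
  have heg1 : Even (g-1) := Nat.Odd.sub_odd hodd odd_one
  have h1 := hind (g-1) (by omega)
  have h3 : P (g-1) ↔ P 0 := by
    rw [h1]
    tauto
  have h2 := hwrap
  tauto
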